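/- Let l ≥ 1, let A be a real (2l)×(2l) matrix with Aᵀ·A = 1 and det A = 1, and let c ∈ ℝ. Then √(det(1 − e^c·A) · det(1 − e^{−c}·A)) = ∑_{j=0}^{2l} (−1)^j · Tr(Λ^j A) · e^{(l−j)c}, where A is regarded as a linear endomorphism of ℝ^{2l}, Λ^j A denotes the induced endomorphism of the j-th exterior power of ℝ^{2l}, and √ is the nonnegative real square root. -/

import Mathlib

open Matrix ExteriorAlgebra

/-- The endomorphism induced by a linear map `f : M →ₗ[R] N` on the `n`-th exterior powers,
obtained by restricting the algebra morphism `ExteriorAlgebra.map f`. -/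
noncomputable def exteriorPowerMap {R M N : Type*} [CommRing R]
    [AddCommGroup M] [Module R M] [AddCommGroup N] [Module R N]
    (n : ℕ) (f : M →ₗ[R] N) : ⋀[R]^n M →ₗ[R] ⋀[R]^n N :=
  (ExteriorAlgebra.map f).toLinearMap.restrict (p := ⋀[R]^n M) (q := ⋀[R]^n N)
    (fun x hx => by
      have h : Submodule.map (ExteriorAlgebra.map f).toLinearMap (⋀[R]^n M) ≤ ⋀[R]^n N := by
        rw [show (⋀[R]^n M : Submodule R (ExteriorAlgebra R M)) =
              LinearMap.range (ι R (M := M)) ^ n from rfl,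
          Submodule.map_pow, ExteriorAlgebra.ι_range_map_map]
        exact pow_le_pow_left' (LinearMap.map_le_range) n
      exact h (Submodule.mem_map_of_mem hx))

namespace ExtAux

variable {N : ℕ} {n : ℕ}

abbrev Idx (N n : ℕ) := {s : Finset (Fin N) // s.card = n}

noncomputable def stdVec (N : ℕ) (i : Fin N) : Fin N → ℝ := Pi.single i 1

/-- ordered coordinates of a size-`n` subset -/
noncomputable def emb (s : Idx N n) (k : Fin n) : Fin N := (s.1.orderIsoOfFin s.2 k : Fin N)

lemma emb_injective (s : Idx N n) : Function.Injective (emb s) := fun a b h => by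
  have := Subtype.coe_injective h
  exact (s.1.orderIsoOfFin s.2).injective this

lemma emb_mem (s : Idx N n) (k : Fin n) : emb s k ∈ s.1 := (s.1.orderIsoOfFin s.2 k).2

noncomputable def wfam (s : Idx N n) : ExteriorAlgebra ℝ (Fin N → ℝ) :=
  ιMulti ℝ n fun i => stdVec N (emb s i)

noncomputable def Dfun (s : Idx N n) : (Fin N → ℝ) [⋀^Fin n]→ₗ[ℝ] ℝ :=
  (Matrix.detRowAlternating).compLinearMap (LinearMap.funLeft ℝ ℝ (emb s))

lemma Dfun_apply (s : Idx N n) (v : Fin n → (Fin N → ℝ)) :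
    Dfun s v = Matrix.det (Matrix.of fun i k => v i (emb s k)) := rfl

noncomputable def phi (s : Idx N n) : ExteriorAlgebra ℝ (Fin N → ℝ) →ₗ[ℝ] ℝ :=
  liftAlternating (fun i => if h : n = i then h ▸ Dfun s else 0)

lemma phi_ιMulti (s : Idx N n) (v : Fin n → (Fin N → ℝ)) :
    phi s (ιMulti ℝ n v) = Dfun s v := by
  rw [phi, liftAlternating_apply_ιMulti, dif_pos rfl]

lemma phi_wfam (s t : Idx N n) : phi s (wfam t) = if s = t then 1 else 0 := by
  rw [wfam, phi_ιMulti, Dfun_apply]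
  by_cases h : s = t
  · subst h
    rw [if_pos rfl]
    have : (Matrix.of fun i k => stdVec N (emb s i) (emb s k)) = 1 := by
      ext i k
      simp only [Matrix.of_apply, stdVec, Pi.single_apply, Matrix.one_apply]
      by_cases hik : i = k
      · simp [hik]
      · rw [if_neg fun hc => hik (emb_injective s hc).symm, if_neg hik]
    rw [this, Matrix.det_one]
  · rw [if_neg h]
    -- there is an element of t not in s
    have hne : ¬ t.1 ⊆ s.1 := by
      intro hsub
      exact h (Subtype.ext (Finset.eq_of_subset_of_card_le hsub (le_of_eq (s.2.trans t.2.symm))).symm)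
    obtain ⟨a, hat, has⟩ := Finset.not_subset.mp hne
    set i0 : Fin n := (t.1.orderIsoOfFin t.2).symm ⟨a, hat⟩ with hi0
    apply Matrix.det_eq_zero_of_row_eq_zero i0
    intro k
    have hta : emb t i0 = a := by
      simp [emb, hi0]
    simp only [Matrix.of_apply, stdVec, Pi.single_apply, hta]
    rw [if_neg]
    intro hc
    exact has (hc ▸ emb_mem s k)


lemma wfam_linearIndependent : LinearIndependent ℝ (wfam (N := N) (n := n)) := by
  rw [Fintype.linearIndependent_iff]
  intro g hg s
  have := congrArg (phi s) hg
  rw [map_sum, map_zero] at this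
  simp only [_root_.map_smul, phi_wfam, smul_eq_mul, mul_ite, mul_one, mul_zero,
    Finset.sum_ite_eq] at this
  simpa using this

lemma span_wfam :
    Submodule.span ℝ (Set.range (wfam (N := N) (n := n))) = ⋀[ℝ]^n (Fin N → ℝ) := by
  refine le_antisymm (Submodule.span_le.2 ?_) ?_
  · rintro _ ⟨s, rfl⟩
    exact ιMulti_range ℝ n ⟨_, rfl⟩
  · rw [← ιMulti_span_fixedDegree]
    refine Submodule.span_le.2 ?_
    rintro _ ⟨v, rfl⟩
    -- expand v i in the standard basis
    have hv : ∀ i, v i = ∑ x : Fin N, v i x • stdVec N x := by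
      intro i
      funext j
      simp [stdVec, Pi.single_apply]
    have h1 : ιMulti ℝ n v
        = ∑ r : Fin n → Fin N, (∏ i, v i (r i)) • ιMulti ℝ n (fun i => stdVec N (r i)) := by
      conv_lhs => rw [show v = fun i => ∑ x : Fin N, v i x • stdVec N x from funext hv]
      rw [show ⇑(ιMulti ℝ (M := Fin N → ℝ) n) = ⇑(ιMulti ℝ n).toMultilinearMap from rfl]
      rw [MultilinearMap.map_sum]
      exact Finset.sum_congr rfl fun r _ => (ιMulti ℝ n).toMultilinearMap.map_smul_univ _ _
    rw [h1]
    refine Submodule.sum_mem _ fun r _ => Submodule.smul_mem _ _ ?_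
    by_cases hr : Function.Injective r
    · -- r is a permutation of an ordered tuple
      set s : Idx N n := ⟨Finset.image r Finset.univ, by
        rw [Finset.card_image_of_injective _ hr, Finset.card_univ, Fintype.card_fin]⟩ with hs
      have hmem : ∀ i, r i ∈ s.1 := fun i => Finset.mem_image_of_mem r (Finset.mem_univ i)
      set σ : Fin n → Fin n := fun i => (s.1.orderIsoOfFin s.2).symm ⟨r i, hmem i⟩ with hσ
      have hσinj : Function.Injective σ := by
        intro a b hab
        apply hr
        have h2 : (⟨r a, hmem a⟩ : {x // x ∈ s.1}) = ⟨r b, hmem b⟩ :=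
          (s.1.orderIsoOfFin s.2).symm.injective hab
        exact Subtype.ext_iff.mp h2
      set σ' : Equiv.Perm (Fin n) := Equiv.ofBijective σ (Finite.injective_iff_bijective.mp hσinj)
      have hre : (fun i => stdVec N (r i)) = (fun i => stdVec N (emb s i)) ∘ σ' := by
        funext i
        simp only [Function.comp_apply, σ', Equiv.ofBijective_apply, hσ, emb,
          OrderIso.apply_symm_apply]
      rw [hre, AlternatingMap.map_perm]
      exact Submodule.smul_mem _ _ (Submodule.subset_span ⟨s, rfl⟩)
    · rw [(ιMulti ℝ n).map_eq_zero_of_not_injective _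
        (fun hc => hr (fun a b hab => ?_))]
      · exact Submodule.zero_mem _
      · exact hc (congrArg (stdVec N) hab)

noncomputable def wfam' (s : Idx N n) : ⋀[ℝ]^n (Fin N → ℝ) :=
  ⟨wfam s, ιMulti_range ℝ n ⟨_, rfl⟩⟩

noncomputable def bW (N n : ℕ) : Module.Basis (Idx N n) ℝ (⋀[ℝ]^n (Fin N → ℝ)) := by
  refine Module.Basis.mk (v := wfam') ?_ ?_
  · exact LinearIndependent.of_comp (⋀[ℝ]^n (Fin N → ℝ)).subtype wfam_linearIndependent
  · have h : Submodule.map (⋀[ℝ]^n (Fin N → ℝ)).subtype (Submodule.span ℝ (Set.range wfam'))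
        = Submodule.map (⋀[ℝ]^n (Fin N → ℝ)).subtype ⊤ := by
      rw [Submodule.map_span, Submodule.map_top, Submodule.range_subtype, ← Set.range_comp]
      exact span_wfam
    exact le_of_eq (Submodule.map_injective_of_injective
      (⋀[ℝ]^n (Fin N → ℝ)).injective_subtype h).symm

lemma bW_coord (s : Idx N n) :
    (bW N n).coord s = (phi s).comp (⋀[ℝ]^n (Fin N → ℝ)).subtype := by
  apply Module.Basis.ext (bW N n)
  intro t
  rw [Module.Basis.coord_apply, Module.Basis.repr_self, Finsupp.single_apply]
  simp only [LinearMap.comp_apply, Module.Basis.mk_apply, bW]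
  rw [show ((⋀[ℝ]^n (Fin N → ℝ)).subtype) (wfam' t) = wfam t from rfl, phi_wfam]
  by_cases h : s = t
  · simp [h]
  · rw [if_neg h, if_neg fun hc => h hc.symm]

instance : Module.Finite ℝ (⋀[ℝ]^n (Fin N → ℝ)) := Module.Finite.of_basis (bW N n)

lemma coe_exteriorPowerMap (f : (Fin N → ℝ) →ₗ[ℝ] (Fin N → ℝ)) (x : ⋀[ℝ]^n (Fin N → ℝ)) :
    (exteriorPowerMap n f x : ExteriorAlgebra ℝ (Fin N → ℝ)) = ExteriorAlgebra.map f x := rfl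

lemma trace_exteriorPowerMap (A : Matrix (Fin N) (Fin N) ℝ) :
    LinearMap.trace ℝ (⋀[ℝ]^n (Fin N → ℝ)) (exteriorPowerMap n (Matrix.toLin' A)) =
    ∑ s : Idx N n, (A.submatrix (emb s) (emb s)).det := by
  rw [LinearMap.trace_eq_matrix_trace ℝ (bW N n), Matrix.trace]
  refine Finset.sum_congr rfl fun s _ => ?_
  rw [Matrix.diag]
  rw [LinearMap.toMatrix_apply]
  rw [← Module.Basis.coord_apply, bW_coord]
  have hb : (bW N n) s = wfam' s := Module.Basis.mk_apply _ _ _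
  rw [hb]
  simp only [LinearMap.comp_apply]
  rw [show ((⋀[ℝ]^n (Fin N → ℝ)).subtype) (exteriorPowerMap n (Matrix.toLin' A) (wfam' s))
      = ExteriorAlgebra.map (Matrix.toLin' A) (wfam s) from rfl]
  rw [wfam]
  rw [show (ExteriorAlgebra.map (Matrix.toLin' A)) ((ιMulti ℝ n) fun i => stdVec N (emb s i))
      = ιMulti ℝ n (fun i => Matrix.toLin' A (stdVec N (emb s i))) from
    map_apply_ιMulti _ _]
  rw [phi_ιMulti, Dfun_apply]
  have hM : (Matrix.of fun i k => (Matrix.toLin' A) (stdVec N (emb s i)) (emb s k))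
      = (A.submatrix (emb s) (emb s))ᵀ := by
    ext i k
    simp [stdVec, Matrix.toLin'_apply, Matrix.mulVec_single]
  rw [hM, Matrix.det_transpose]

lemma det_one_add_eq_sum_minors (B : Matrix (Fin N) (Fin N) ℝ) :
    (1 + B).det = ∑ s : Finset (Fin N),
      (B.submatrix (fun i : {x // x ∈ s} => (i : Fin N))
        (fun i : {x // x ∈ s} => (i : Fin N))).det := by
  have h0 : (1 + B).det
      = Matrix.detRowAlternating (B + (1 : Matrix (Fin N) (Fin N) ℝ)) := by
    rw [add_comm]
    rfl
  rw [h0,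
    show ⇑(Matrix.detRowAlternating (R := ℝ) (n := Fin N))
      = ⇑(Matrix.detRowAlternating (R := ℝ) (n := Fin N)).toMultilinearMap from rfl]
  erw [MultilinearMap.map_add_univ]
  refine Finset.sum_congr rfl fun s _ => ?_
  have key : (Matrix.of (s.piecewise (B : Fin N → Fin N → ℝ)
      (1 : Matrix (Fin N) (Fin N) ℝ))).det
      = (B.submatrix (fun i : {x // x ∈ s} => (i : Fin N))
        (fun i : {x // x ∈ s} => (i : Fin N))).det := by
    set C := Matrix.of (s.piecewise (B : Fin N → Fin N → ℝ) (1 : Matrix (Fin N) (Fin N) ℝ))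
    have he := Matrix.det_submatrix_equiv_self (Equiv.sumCompl (fun x => x ∈ s)) C
    rw [← he]
    have hC : C.submatrix (Equiv.sumCompl (fun x => x ∈ s)) (Equiv.sumCompl (fun x => x ∈ s))
        = Matrix.fromBlocks
          (B.submatrix (fun i : {x // x ∈ s} => (i : Fin N)) (fun i : {x // x ∈ s} => (i : Fin N)))
          (B.submatrix (fun i : {x // x ∈ s} => (i : Fin N)) (fun i : {x // ¬ x ∈ s} => (i : Fin N)))
          0 1 := by
      ext i j
      rcases i with i | i <;> rcases j with j | j <;>
        simp only [Matrix.submatrix_apply, Equiv.sumCompl_apply_inl, Equiv.sumCompl_apply_inr,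
          Matrix.fromBlocks_apply₁₁, Matrix.fromBlocks_apply₁₂, Matrix.fromBlocks_apply₂₁,
          Matrix.fromBlocks_apply₂₂, Matrix.of_apply, C]
      · erw [Finset.piecewise_eq_of_mem _ _ _ i.2]
      · erw [Finset.piecewise_eq_of_mem _ _ _ i.2]
      · erw [Finset.piecewise_eq_of_notMem _ _ _ i.2]
        rw [Matrix.one_apply_ne, Matrix.zero_apply]
        intro hc
        exact i.2 (hc ▸ j.2)
      · erw [Finset.piecewise_eq_of_notMem _ _ _ i.2]
        rw [Matrix.one_apply, Matrix.one_apply]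
        by_cases hij : (i : Fin N) = (j : Fin N)
        · rw [if_pos hij, if_pos (Subtype.ext hij)]
        · rw [if_neg hij, if_neg fun hc => hij (congrArg Subtype.val hc)]
    rw [hC, Matrix.det_fromBlocks_zero₂₁, Matrix.det_one, mul_one]
  exact key

lemma minor_emb (A : Matrix (Fin N) (Fin N) ℝ) (s : Idx N n) :
    (A.submatrix (emb s) (emb s)).det
    = (A.submatrix (fun i : {x // x ∈ s.1} => (i : Fin N))
        (fun i : {x // x ∈ s.1} => (i : Fin N))).det := by
  rw [← Matrix.det_submatrix_equiv_self ((s.1.orderIsoOfFin s.2).toEquiv)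
    (A.submatrix _ _), Matrix.submatrix_submatrix]
  rfl

lemma det_one_sub_smul (A : Matrix (Fin N) (Fin N) ℝ) (r : ℝ) :
    (1 - r • A).det = ∑ j ∈ Finset.range (N + 1),
      (-r) ^ j * ∑ s : Idx N j, (A.submatrix (emb s) (emb s)).det := by
  have h1 : (1 : Matrix (Fin N) (Fin N) ℝ) - r • A = 1 + (-r) • A := by
    rw [neg_smul, ← sub_eq_add_neg]
  rw [h1, det_one_add_eq_sum_minors]
  have h2 : ∀ s : Finset (Fin N),
      (((-r) • A).submatrix (fun i : {x // x ∈ s} => (i : Fin N))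
        (fun i : {x // x ∈ s} => (i : Fin N))).det
      = (-r) ^ s.card * (A.submatrix (fun i : {x // x ∈ s} => (i : Fin N))
        (fun i : {x // x ∈ s} => (i : Fin N))).det := by
    intro s
    rw [show (((-r) • A).submatrix (fun i : {x // x ∈ s} => (i : Fin N))
        (fun i : {x // x ∈ s} => (i : Fin N)))
      = (-r) • (A.submatrix (fun i : {x // x ∈ s} => (i : Fin N))
        (fun i : {x // x ∈ s} => (i : Fin N))) from rfl, Matrix.det_smul, Fintype.card_coe]
  simp_rw [h2]
  rw [← Finset.sum_fiberwise_of_maps_to (g := Finset.card)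
    (t := Finset.range (N + 1)) (fun s _ => Finset.mem_range.mpr
      (Nat.lt_succ_of_le ((Finset.card_le_univ s).trans_eq (by simp))))]
  refine Finset.sum_congr rfl fun j _ => ?_
  rw [Finset.mul_sum]
  rw [Finset.sum_subtype (p := fun s : Finset (Fin N) => s.card = j) (Finset.univ.filter (fun s : Finset (Fin N) => s.card = j))
    (fun s => by simp) (fun s => (-r) ^ s.card * (A.submatrix
      (fun i : {x // x ∈ s} => (i : Fin N)) (fun i : {x // x ∈ s} => (i : Fin N))).det)]
  refine Finset.sum_congr rfl fun s hs => ?_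
  rw [minor_emb, s.2]

lemma det_root_pos {N : ℕ} (A : Matrix (Fin N) (Fin N) ℝ) (hA : Aᵀ * A = 1)
    {r : ℝ} (hr : 0 < r) (h0 : ((1 : Matrix (Fin N) (Fin N) ℝ) - r • A).det = 0) : r = 1 := by
  obtain ⟨v, hv, hsol⟩ := (Matrix.exists_mulVec_eq_zero_iff).mpr h0
  have hAv : A *ᵥ v = r⁻¹ • v := by
    have h1 : v - r • (A *ᵥ v) = 0 := by
      have := hsol
      rwa [Matrix.sub_mulVec, Matrix.one_mulVec, Matrix.smul_mulVec] at this
    have h2 : r • (A *ᵥ v) = v := by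
      rw [sub_eq_zero] at h1; exact h1.symm
    calc A *ᵥ v = r⁻¹ • (r • (A *ᵥ v)) := by
          rw [smul_smul, inv_mul_cancel₀ hr.ne', one_smul]
      _ = r⁻¹ • v := by rw [h2]
  have hnorm : (A *ᵥ v) ⬝ᵥ (A *ᵥ v) = v ⬝ᵥ v := by
    rw [Matrix.dotProduct_mulVec, ← Matrix.vecMul_transpose, Matrix.vecMul_vecMul, hA,
      Matrix.vecMul_one]
  rw [hAv, smul_dotProduct, dotProduct_smul, smul_smul, smul_eq_mul] at hnorm
  have hnn : (0:ℝ) ≤ v ⬝ᵥ v := Finset.sum_nonneg fun i _ => mul_self_nonneg _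
  have hvv : 0 < v ⬝ᵥ v :=
    lt_of_le_of_ne hnn (Ne.symm (fun hc => hv (dotProduct_self_eq_zero.mp hc)))
  have h3 : r⁻¹ * r⁻¹ = 1 := by
    have h4 := hnorm
    nlinarith [hvv]
  have h5 : r * r = 1 := by
    have h6 : r * r * (r⁻¹ * r⁻¹) = r * r := by rw [h3, mul_one]
    field_simp at h6
    nlinarith [h6]
  nlinarith [h5, hr]

lemma det_one_sub_smul_nonneg (l : ℕ) (A : Matrix (Fin (2 * l)) (Fin (2 * l)) ℝ)
    (hA : Aᵀ * A = 1) (hdet : A.det = 1) {r : ℝ} (hr : 0 < r) :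
    0 ≤ ((1 : Matrix (Fin (2 * l)) (Fin (2 * l)) ℝ) - r • A).det := by
  by_contra hneg
  push_neg at hneg
  set g : ℝ → ℝ := fun t => ((1 : Matrix (Fin (2 * l)) (Fin (2 * l)) ℝ) - t • A).det with hg
  have hgc : Continuous g :=
    (continuous_const.sub (continuous_id.smul continuous_const)).matrix_det
  have hg0 : g 0 = 1 := by simp [hg]
  have hr1 : 1 < r := by
    have hsub : Set.Icc (g r) (g 0) ⊆ g '' Set.Icc 0 r :=
      intermediate_value_Icc' hr.le hgc.continuousOn
    obtain ⟨x, hx, hgx⟩ := hsub ⟨hneg.le, by rw [hg0]; norm_num⟩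
    have hx0 : x ≠ 0 := fun hc => by rw [hc, hg0] at hgx; norm_num at hgx
    have hxr : x ≠ r := fun hc => by rw [hc] at hgx; exact hneg.ne hgx
    have hx1 := det_root_pos A hA (lt_of_le_of_ne hx.1 (Ne.symm hx0)) hgx
    rw [← hx1]
    exact lt_of_le_of_ne hx.2 hxr
  -- find large T with g T > 0
  have hh : Continuous (fun u : ℝ => (A - u • 1).det) :=
    (continuous_const.sub (continuous_id.smul continuous_const)).matrix_det
  have hev : ∀ᶠ u in nhds (0 : ℝ), 0 < (A - u • 1).det := by
    have hca := hh.continuousAt (x := 0)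
    rw [ContinuousAt, show (A - (0:ℝ) • 1).det = 1 by simp [hdet]] at hca
    exact hca.eventually (eventually_gt_nhds one_pos)
  obtain ⟨δ, hδ, hball⟩ := Metric.eventually_nhds_iff.mp hev
  set T : ℝ := max (r + 1) (δ⁻¹ + 1) with hT
  have hTr : r < T := lt_of_lt_of_le (lt_add_one r) (le_max_left _ _)
  have hT0 : 0 < T := hr.trans hTr
  have hδT : δ⁻¹ < T := lt_of_lt_of_le (lt_add_one _) (le_max_right _ _)
  have hTδ : T⁻¹ < δ := by
    have h7 : T⁻¹ < (δ⁻¹)⁻¹ := by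
      apply inv_strictAnti₀ (inv_pos.mpr hδ) hδT
    rwa [inv_inv] at h7
  have hpos : 0 < (A - T⁻¹ • 1).det := by
    apply hball
    rw [dist_zero_right, Real.norm_eq_abs, abs_of_pos (inv_pos.mpr hT0)]
    exact hTδ
  have hgT : 0 < g T := by
    have hfac : (1 : Matrix (Fin (2 * l)) (Fin (2 * l)) ℝ) - T • A
        = (-T) • (A - T⁻¹ • 1) := by
      rw [smul_sub, smul_smul, neg_mul, mul_inv_cancel₀ hT0.ne', neg_smul, neg_smul, one_smul]
      abel
    show 0 < ((1 : Matrix (Fin (2 * l)) (Fin (2 * l)) ℝ) - T • A).det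
    rw [hfac, Matrix.det_smul, Fintype.card_fin, (even_two_mul l).neg_pow]
    exact mul_pos (pow_pos hT0 _) hpos
  have hsub2 : Set.Icc (g r) (g T) ⊆ g '' Set.Icc r T :=
    intermediate_value_Icc hTr.le hgc.continuousOn
  obtain ⟨x, hx, hgx⟩ := hsub2 ⟨hneg.le, hgT.le⟩
  have hx1 := det_root_pos A hA (hr.trans_le hx.1) hgx
  linarith [hx.1, hr1, hx1.symm.le]

end ExtAux

theorem sqrt_det_eq_alternating_sum_trace_exterior
    (l : ℕ) (hl : 1 ≤ l) (A : Matrix (Fin (2 * l)) (Fin (2 * l)) ℝ)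
    (hA : Aᵀ * A = 1) (hdet : A.det = 1) (c : ℝ) :
    Real.sqrt (((1 : Matrix (Fin (2 * l)) (Fin (2 * l)) ℝ) - Real.exp c • A).det *
        ((1 : Matrix (Fin (2 * l)) (Fin (2 * l)) ℝ) - Real.exp (-c) • A).det) =
    ∑ j ∈ Finset.range (2 * l + 1),
      (-1 : ℝ) ^ j *
        LinearMap.trace ℝ (⋀[ℝ]^j (Fin (2 * l) → ℝ))
          (exteriorPowerMap j (Matrix.toLin' A)) *
        Real.exp (((l : ℝ) - (j : ℝ)) * c) := by
  set d : ℝ := ((1 : Matrix (Fin (2 * l)) (Fin (2 * l)) ℝ) - Real.exp (-c) • A).det with hd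
  -- relation between the two determinants
  have det_shift : ∀ r : ℝ, ((1 : Matrix (Fin (2 * l)) (Fin (2 * l)) ℝ) - r • A).det
      = (A - r • 1).det := by
    intro r
    calc ((1 : Matrix (Fin (2 * l)) (Fin (2 * l)) ℝ) - r • A).det
        = Aᵀ.det * ((1 : Matrix (Fin (2 * l)) (Fin (2 * l)) ℝ) - r • A).det := by
          rw [Matrix.det_transpose, hdet, one_mul]
      _ = (Aᵀ * ((1 : Matrix (Fin (2 * l)) (Fin (2 * l)) ℝ) - r • A)).det :=
          (Matrix.det_mul _ _).symm
      _ = (Aᵀ - r • 1).det := by rw [Matrix.mul_sub, Matrix.mul_one, Matrix.mul_smul, hA]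
      _ = ((A - r • 1)ᵀ).det := by rw [Matrix.transpose_sub, Matrix.transpose_smul,
            Matrix.transpose_one]
      _ = (A - r • 1).det := Matrix.det_transpose _
  have hrel : ((1 : Matrix (Fin (2 * l)) (Fin (2 * l)) ℝ) - Real.exp c • A).det
      = (Real.exp c) ^ (2 * l) * d := by
    rw [det_shift (Real.exp c)]
    have hfac : A - Real.exp c • 1
        = (-(Real.exp c)) • ((1 : Matrix (Fin (2 * l)) (Fin (2 * l)) ℝ) - Real.exp (-c) • A) := by
      rw [smul_sub, smul_smul, neg_mul, ← Real.exp_add, add_neg_cancel, Real.exp_zero,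
        neg_smul, neg_smul, one_smul]
      abel
    rw [hfac, Matrix.det_smul, Fintype.card_fin, (even_two_mul l).neg_pow, hd]
  have hnonneg : 0 ≤ d := ExtAux.det_one_sub_smul_nonneg l A hA hdet (Real.exp_pos (-c))
  -- left-hand side
  have hlhs : Real.sqrt (((1 : Matrix (Fin (2 * l)) (Fin (2 * l)) ℝ) - Real.exp c • A).det *
      ((1 : Matrix (Fin (2 * l)) (Fin (2 * l)) ℝ) - Real.exp (-c) • A).det)
      = (Real.exp c) ^ l * d := by
    rw [← hd, hrel]
    have : Real.exp c ^ (2 * l) * d * d = ((Real.exp c) ^ l * d) ^ 2 := by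
      rw [mul_pow, ← pow_mul, mul_comm l 2]
      ring
    rw [this, Real.sqrt_sq (mul_nonneg (pow_nonneg (Real.exp_pos c).le l) hnonneg)]
  rw [hlhs]
  -- right-hand side
  have htr : ∀ j : ℕ, LinearMap.trace ℝ (⋀[ℝ]^j (Fin (2 * l) → ℝ))
      (exteriorPowerMap j (Matrix.toLin' A))
      = ∑ s : ExtAux.Idx (2 * l) j, (A.submatrix (ExtAux.emb s) (ExtAux.emb s)).det :=
    fun j => ExtAux.trace_exteriorPowerMap A
  have hexp : ∀ j : ℕ, Real.exp (((l : ℝ) - (j : ℝ)) * c)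
      = (Real.exp c) ^ l * (Real.exp (-c)) ^ j := by
    intro j
    rw [← Real.exp_nat_mul, ← Real.exp_nat_mul, ← Real.exp_add]
    congr 1
    ring
  calc (Real.exp c) ^ l * d
      = (Real.exp c) ^ l * ∑ j ∈ Finset.range (2 * l + 1), (-(Real.exp (-c))) ^ j *
        ∑ s : ExtAux.Idx (2 * l) j, (A.submatrix (ExtAux.emb s) (ExtAux.emb s)).det := by
        rw [hd, ExtAux.det_one_sub_smul]
    _ = ∑ j ∈ Finset.range (2 * l + 1),
        (-1 : ℝ) ^ j *
          LinearMap.trace ℝ (⋀[ℝ]^j (Fin (2 * l) → ℝ))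
            (exteriorPowerMap j (Matrix.toLin' A)) *
          Real.exp (((l : ℝ) - (j : ℝ)) * c) := by
        rw [Finset.mul_sum]
        refine Finset.sum_congr rfl fun j _ => ?_
        rw [htr j, hexp j, neg_pow]
        ring
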